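/- For every sufficiently large a > 0, the set of positive integers u with φ(u)/u ≥ 1/a has positive lower asymptotic density, and this density tends to 1 as a → ∞. -/

import Mathlib

open Finset Filter Real

lemma totient_ratio_eq (u : ℕ) (hu : u ≠ 0) :
    (Nat.totient u : ℝ) / u = ∏ p ∈ u.primeFactors, (1 - (p : ℝ)⁻¹) := by
  have h := Nat.totient_eq_mul_prod_factors u
  have h' : ((Nat.totient u : ℚ) : ℝ) = (((u : ℚ) * ∏ p ∈ u.primeFactors, (1 - (p:ℚ)⁻¹) : ℚ) : ℝ) := by
    exact_mod_cast congrArg (fun q : ℚ => (q : ℝ)) h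
  push_cast at h'
  rw [h', mul_comm, mul_div_assoc, div_self (by exact_mod_cast hu), mul_one]

lemma exp_le_one_sub {x : ℝ} (hx0 : 0 ≤ x) (hx : x ≤ 1/2) :
    Real.exp (-(2*x)) ≤ 1 - x := by
  have hE : Real.exp (-(2*x)) * Real.exp (2*x) = 1 := by
    rw [← Real.exp_add]; simp
  nlinarith [Real.exp_pos (2*x), Real.add_one_le_exp (2*x), Real.exp_pos (-(2*x))]

lemma key_lower (u : ℕ) (hu : u ≠ 0) :
    Real.exp (-(2 * ∑ p ∈ u.primeFactors, (p:ℝ)⁻¹)) ≤ (Nat.totient u : ℝ) / u := by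
  rw [totient_ratio_eq u hu]
  have h1 : -(2 * ∑ p ∈ u.primeFactors, (p:ℝ)⁻¹) = ∑ p ∈ u.primeFactors, -(2 * (p:ℝ)⁻¹) := by
    rw [Finset.mul_sum]; exact (Finset.sum_neg_distrib _).symm
  rw [h1, Real.exp_sum]
  apply Finset.prod_le_prod
  · intro p _; exact (Real.exp_pos _).le
  · intro p hp
    have hp2 : (2:ℝ) ≤ p := by exact_mod_cast (Nat.prime_of_mem_primeFactors hp).two_le
    have hpinv : (p:ℝ)⁻¹ ≤ 1/2 := by
      rw [inv_le_comm₀ (by linarith) (by norm_num)]; linarith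
    exact exp_le_one_sub (by positivity) hpinv

lemma basel (N : ℕ) : ∑ n ∈ Icc 1 N, ((n:ℝ)⁻¹)^2 ≤ 2 - 2/(N+1) := by
  induction N with
  | zero => simp
  | succ N ih =>
    rw [Finset.sum_Icc_succ_top (by omega)]
    have h1 : (0:ℝ) < N+1 := by positivity
    have h2 : (0:ℝ) < N+2 := by positivity
    have key : ((N+1:ℕ):ℝ)⁻¹^2 ≤ 2/(N+1) - 2/(N+2) := by
      push_cast
      rw [div_sub_div _ _ (ne_of_gt h1) (ne_of_gt h2), inv_pow,
        inv_le_iff_one_le_mul₀ (by positivity), div_mul_eq_mul_div,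
        le_div_iff₀ (by positivity)]
      ring_nf
      nlinarith
    push_cast
    push_cast at key
    rw [show ((N:ℝ)+1+1) = ((N:ℝ)+2) by ring]
    linarith

lemma card_mult_le (N p : ℕ) (hp : 0 < p) :
    (((Icc 1 N).filter (fun u => p ∈ u.primeFactors)).card : ℝ) ≤ N * (p:ℝ)⁻¹ := by
  have hsub : (Icc 1 N).filter (fun u => p ∈ u.primeFactors) ⊆ (Ioc 0 N).filter (p ∣ ·) := by
    intro u hu
    simp only [Finset.mem_filter, Finset.mem_Icc, Finset.mem_Ioc] at hu ⊢
    exact ⟨⟨hu.1.1, hu.1.2⟩, Nat.dvd_of_mem_primeFactors hu.2⟩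
  have h1 : (((Icc 1 N).filter (fun u => p ∈ u.primeFactors)).card : ℝ) ≤ ((N / p : ℕ) : ℝ) := by
    exact_mod_cast (Finset.card_le_card hsub).trans_eq (Nat.Ioc_filter_dvd_card_eq_div N p)
  refine h1.trans ?_
  rw [← div_eq_mul_inv]
  exact Nat.cast_div_le.trans (by push_cast; exact le_rfl)

lemma sum_sum_le (N : ℕ) :
    ∑ u ∈ Icc 1 N, ∑ p ∈ u.primeFactors, (p:ℝ)⁻¹ ≤ 2 * N := by
  have h1 : ∀ u ∈ Icc 1 N, ∑ p ∈ u.primeFactors, (p:ℝ)⁻¹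
      = ∑ p ∈ (Icc 1 N).filter (· ∈ u.primeFactors), (p:ℝ)⁻¹ := by
    intro u hu
    congr 1
    rw [Finset.filter_mem_eq_inter]
    refine (Finset.inter_eq_right.mpr ?_).symm
    intro p hp
    simp only [Finset.mem_Icc] at hu ⊢
    exact ⟨(Nat.prime_of_mem_primeFactors hp).one_lt.le,
      (Nat.le_of_dvd (by omega) (Nat.dvd_of_mem_primeFactors hp)).trans hu.2⟩
  rw [Finset.sum_congr rfl h1]
  rw [Finset.sum_comm' (t' := Icc 1 N)
    (s' := fun p => (Icc 1 N).filter (fun u => p ∈ u.primeFactors))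
    (by intro x y; simp only [Finset.mem_filter]; tauto)]
  have h2 : ∀ p ∈ Icc 1 N, ∑ u ∈ (Icc 1 N).filter (fun u => p ∈ u.primeFactors), (p:ℝ)⁻¹
      ≤ N * ((p:ℝ)⁻¹)^2 := by
    intro p hp
    rw [Finset.sum_const, nsmul_eq_mul]
    simp only [Finset.mem_Icc] at hp
    have := card_mult_le N p (by omega)
    have hpnn : (0:ℝ) ≤ (p:ℝ)⁻¹ := by positivity
    calc (((Icc 1 N).filter (fun u => p ∈ u.primeFactors)).card : ℝ) * (p:ℝ)⁻¹
        ≤ (N * (p:ℝ)⁻¹) * (p:ℝ)⁻¹ := by apply mul_le_mul_of_nonneg_right this hpnn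
      _ = N * ((p:ℝ)⁻¹)^2 := by ring
  calc ∑ p ∈ Icc 1 N, ∑ u ∈ (Icc 1 N).filter (fun u => p ∈ u.primeFactors), (p:ℝ)⁻¹
      ≤ ∑ p ∈ Icc 1 N, (N:ℝ) * ((p:ℝ)⁻¹)^2 := Finset.sum_le_sum h2
    _ = N * ∑ p ∈ Icc 1 N, ((p:ℝ)⁻¹)^2 := by rw [Finset.mul_sum]
    _ ≤ N * 2 := by
        apply mul_le_mul_of_nonneg_left _ (by positivity)
        refine (basel N).trans ?_
        have : (0:ℝ) ≤ 2/(N+1) := by positivity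
        linarith
    _ = 2 * N := by ring

lemma density_lower (a : ℝ) (hapos : 0 < a) (ha : 8 ≤ Real.log a) (N : ℕ) (hN : 1 ≤ N) :
    1 - 4 / Real.log a ≤
      (((Finset.Icc 1 N).filter fun u =>
        (1 : ℝ) / a ≤ (Nat.totient u : ℝ) / u).card : ℝ) / N := by
  have hla : (0:ℝ) < Real.log a := by linarith
  set bad := (Icc 1 N).filter (fun u => ¬ ((1:ℝ)/a ≤ (Nat.totient u : ℝ) / u)) with hbad
  have hmarkov : ∀ u ∈ bad, Real.log a / 2 ≤ ∑ p ∈ u.primeFactors, (p:ℝ)⁻¹ := by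
    intro u hu
    simp only [hbad, Finset.mem_filter, Finset.mem_Icc, not_le] at hu
    have hu0 : u ≠ 0 := by omega
    have h1 : Real.exp (-(2 * ∑ p ∈ u.primeFactors, (p:ℝ)⁻¹)) < 1/a :=
      lt_of_le_of_lt (key_lower u hu0) hu.2
    have h2 : -(2 * ∑ p ∈ u.primeFactors, (p:ℝ)⁻¹) < Real.log (1/a) :=
      (Real.lt_log_iff_exp_lt (by positivity)).mpr h1
    rw [one_div, Real.log_inv] at h2
    linarith
  have hsum : Real.log a / 2 * bad.card ≤ 2 * N := by
    calc Real.log a / 2 * bad.card = ∑ _u ∈ bad, Real.log a / 2 := by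
          rw [Finset.sum_const, nsmul_eq_mul]; ring
      _ ≤ ∑ u ∈ bad, ∑ p ∈ u.primeFactors, (p:ℝ)⁻¹ := Finset.sum_le_sum hmarkov
      _ ≤ ∑ u ∈ Icc 1 N, ∑ p ∈ u.primeFactors, (p:ℝ)⁻¹ := by
          apply Finset.sum_le_sum_of_subset_of_nonneg (Finset.filter_subset _ _)
          intro u _ _
          positivity
      _ ≤ 2 * N := sum_sum_le N
  have hbcard : (bad.card : ℝ) ≤ 4 * N / Real.log a := by
    rw [le_div_iff₀ hla]
    nlinarith
  have hcards : (((Icc 1 N).filter fun u =>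
      (1 : ℝ) / a ≤ (Nat.totient u : ℝ) / u).card : ℝ) + bad.card = N := by
    have h := Finset.card_filter_add_card_filter_not
      (s := Icc 1 N) (p := fun u => (1 : ℝ) / a ≤ (Nat.totient u : ℝ) / u)
    rw [Nat.card_Icc, Nat.add_sub_cancel] at h
    exact_mod_cast h
  have hNpos : (0:ℝ) < N := by exact_mod_cast hN
  rw [le_div_iff₀ hNpos]
  have hexp : (1 - 4/Real.log a) * (N:ℝ) = N - 4*N/Real.log a := by ring
  linarith [hbcard, hcards]

theorem erdos_totient_density :
    ∀ ε : ℝ, 0 < ε →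
      ∃ a₀ : ℝ, 0 < a₀ ∧ ∀ a : ℝ, a₀ ≤ a →
        0 < Filter.liminf (fun N : ℕ =>
            (((Finset.Icc 1 N).filter fun u =>
              (1 : ℝ) / a ≤ (Nat.totient u : ℝ) / u).card : ℝ) / N) Filter.atTop ∧
        1 - ε ≤ Filter.liminf (fun N : ℕ =>
            (((Finset.Icc 1 N).filter fun u =>
              (1 : ℝ) / a ≤ (Nat.totient u : ℝ) / u).card : ℝ) / N) Filter.atTop := by
  intro ε hε
  refine ⟨max (Real.exp (8/ε)) (Real.exp 8), lt_max_of_lt_right (Real.exp_pos 8), ?_⟩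
  intro a ha
  have hapos : (0:ℝ) < a := lt_of_lt_of_le (lt_max_of_lt_right (Real.exp_pos 8)) ha
  have hla8 : 8 ≤ Real.log a := by
    rw [← Real.log_exp 8]
    exact Real.log_le_log (Real.exp_pos 8) ((le_max_right _ _).trans ha)
  have hlaε : 8/ε ≤ Real.log a := by
    rw [← Real.log_exp (8/ε)]
    exact Real.log_le_log (Real.exp_pos _) ((le_max_left _ _).trans ha)
  have hla : (0:ℝ) < Real.log a := by linarith
  set g : ℕ → ℝ := fun N =>
    (((Finset.Icc 1 N).filter fun u =>
      (1 : ℝ) / a ≤ (Nat.totient u : ℝ) / u).card : ℝ) / N with hg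
  have hcob : IsCoboundedUnder (· ≥ ·) atTop g := by
    apply Filter.isCoboundedUnder_ge_of_le atTop (x := 1)
    intro N
    rcases Nat.eq_zero_or_pos N with h | h
    · simp [hg, h]
    · rw [hg]
      simp only
      rw [div_le_one (by positivity)]
      calc (((Finset.Icc 1 N).filter _).card : ℝ) ≤ ((Finset.Icc 1 N).card : ℝ) := by
            exact_mod_cast Finset.card_le_card (Finset.filter_subset _ _)
        _ = N := by rw [Nat.card_Icc, Nat.add_sub_cancel]
  have hev : ∀ᶠ N in atTop, 1 - 4 / Real.log a ≤ g N := by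
    filter_upwards [Filter.eventually_ge_atTop 1] with N hN
    exact density_lower a hapos hla8 N hN
  have hlim : 1 - 4 / Real.log a ≤ Filter.liminf g Filter.atTop :=
    Filter.le_liminf_of_le hcob hev
  have h1 : 4 / Real.log a ≤ 1/2 := by
    rw [div_le_iff₀ hla]; linarith
  have h2 : 4 / Real.log a ≤ ε/2 := by
    rw [div_le_iff₀ hla]
    rw [div_le_iff₀ hε] at hlaε
    nlinarith
  constructor
  · linarith
  · linarith
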